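/- Suppose g and g* are measurable functions bounded in absolute value by B, and Y is integrable. Let T_β(Y) = min(Y, β) be the truncation of Y at level β > 0. Then |E[(Y - g(X))² - (Y - g*(X))²] - E[(T_β Y - g(X))² - (T_β Y - g*(X))²]| ≤ 4 B E[|Y| 1{Y > β}]. -/

import Mathlib

open MeasureTheory

lemma comp_bdd_integrable {Ω α : Type*} [MeasurableSpace Ω] [MeasurableSpace α]
    (μ : Measure Ω) [IsProbabilityMeasure μ] (X : Ω → α) (h : α → ℝ) (C : ℝ)
    (hX : Measurable X) (hh : Measurable h) (hC : ∀ x, |h x| ≤ C) :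
    Integrable (fun ω => h (X ω)) μ := by
  refine Integrable.mono' (integrable_const C) ((hh.comp hX).aestronglyMeasurable) ?_
  exact Filter.Eventually.of_forall fun ω => hC (X ω)

/-- Truncation bias of the excess risk: if `g, g*` are bounded by `B` and `Y` is
integrable, with truncation `T_β Y = min Y β`, then
`|E[(Y-g(X))² - (Y-g*(X))²] - E[(T_β Y-g(X))² - (T_β Y-g*(X))²]| ≤ 4B E[|Y| 1{Y>β}]`. -/
theorem truncation_excess_risk_bias
    {Ω α : Type*} [MeasurableSpace Ω] [MeasurableSpace α]
    (μ : Measure Ω) [IsProbabilityMeasure μ]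
    (X : Ω → α) (Y : Ω → ℝ) (g gstar : α → ℝ) (B βt : ℝ)
    (hX : Measurable X) (hg : Measurable g) (hgs : Measurable gstar)
    (hY : Integrable Y μ) (hY2 : Integrable (fun ω => (Y ω) ^ 2) μ)
    (hgB : ∀ x, |g x| ≤ B) (hgsB : ∀ x, |gstar x| ≤ B) (hβ : 0 < βt) :
    |(∫ ω, ((Y ω - g (X ω)) ^ 2 - (Y ω - gstar (X ω)) ^ 2) ∂μ) -
      ∫ ω, ((min (Y ω) βt - g (X ω)) ^ 2 - (min (Y ω) βt - gstar (X ω)) ^ 2) ∂μ| ≤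
      4 * B * ∫ ω, (if βt < Y ω then |Y ω| else 0) ∂μ := by
  have hbdd : ∀ x, |gstar x - g x| ≤ 2 * B := fun x => by
    calc |gstar x - g x| ≤ |gstar x| + |g x| := abs_sub _ _
    _ ≤ B + B := add_le_add (hgsB x) (hgB x)
    _ = 2 * B := by ring
  have hbint : Integrable (fun ω => gstar (X ω) - g (X ω)) μ :=
    comp_bdd_integrable μ X _ (2 * B) hX (hgs.sub hg) hbdd
  have hbmeas : AEStronglyMeasurable (fun ω => gstar (X ω) - g (X ω)) μ :=
    ((hgs.sub hg).comp hX).aestronglyMeasurable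
  have hsq : Integrable (fun ω => (g (X ω)) ^ 2 - (gstar (X ω)) ^ 2) μ := by
    refine comp_bdd_integrable μ X (fun x => (g x) ^ 2 - (gstar x) ^ 2) (2 * B ^ 2) hX
      ((hg.pow_const 2).sub (hgs.pow_const 2)) fun x => ?_
    have h1 := hgB x; have h2 := hgsB x
    have h1' := abs_nonneg (g x); have h2' := abs_nonneg (gstar x)
    have e1 : (g x) ^ 2 = |g x| ^ 2 := (sq_abs _).symm
    have e2 : (gstar x) ^ 2 = |gstar x| ^ 2 := (sq_abs _).symm
    rw [abs_sub_le_iff]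
    constructor <;> nlinarith [sq_abs (g x), sq_abs (gstar x)]
  have hYb : Integrable (fun ω => 2 * Y ω * (gstar (X ω) - g (X ω))) μ := by
    have := (hY.const_mul 2).bdd_mul hbmeas (c := 2 * B) (Filter.Eventually.of_forall fun ω => by
      simpa [Real.norm_eq_abs] using hbdd (X ω))
    simpa [mul_comm, mul_assoc, mul_left_comm] using this
  have I1 : Integrable (fun ω => (Y ω - g (X ω)) ^ 2 - (Y ω - gstar (X ω)) ^ 2) μ := by
    have : (fun ω => (Y ω - g (X ω)) ^ 2 - (Y ω - gstar (X ω)) ^ 2)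
        = fun ω => 2 * Y ω * (gstar (X ω) - g (X ω)) + ((g (X ω)) ^ 2 - (gstar (X ω)) ^ 2) := by
      funext ω; ring
    rw [this]; exact hYb.add hsq
  have hT : Integrable (fun ω => min (Y ω) βt) μ := by
    refine Integrable.mono' (hY.abs.add (integrable_const |βt|))
      ((hY.aemeasurable.min aemeasurable_const).aestronglyMeasurable)
      (Filter.Eventually.of_forall fun ω => ?_)
    simp only [Real.norm_eq_abs, Pi.add_apply]
    rcases le_total (Y ω) βt with h | h
    · rw [min_eq_left h]
      linarith [abs_nonneg βt]
    · rw [min_eq_right h]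
      linarith [abs_nonneg (Y ω)]
  have hTb : Integrable (fun ω => 2 * min (Y ω) βt * (gstar (X ω) - g (X ω))) μ := by
    have := (hT.const_mul 2).bdd_mul hbmeas (c := 2 * B) (Filter.Eventually.of_forall fun ω => by
      simpa [Real.norm_eq_abs] using hbdd (X ω))
    simpa [mul_comm, mul_assoc, mul_left_comm] using this
  have I2 : Integrable (fun ω => (min (Y ω) βt - g (X ω)) ^ 2 - (min (Y ω) βt - gstar (X ω)) ^ 2) μ := by
    have : (fun ω => (min (Y ω) βt - g (X ω)) ^ 2 - (min (Y ω) βt - gstar (X ω)) ^ 2)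
        = fun ω => 2 * min (Y ω) βt * (gstar (X ω) - g (X ω)) + ((g (X ω)) ^ 2 - (gstar (X ω)) ^ 2) := by
      funext ω; ring
    rw [this]; exact hTb.add hsq
  -- the indicator function is integrable
  have hφmeas : AEStronglyMeasurable (fun ω => if βt < Y ω then |Y ω| else 0) μ := by
    have hf : Measurable (fun t : ℝ => if βt < t then |t| else 0) :=
      Measurable.ite (measurableSet_lt measurable_const measurable_id) measurable_abs measurable_const
    exact (hf.comp_aemeasurable hY.1.aemeasurable).aestronglyMeasurable
  have hφ : Integrable (fun ω => if βt < Y ω then |Y ω| else 0) μ := by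
    refine Integrable.mono' hY.abs hφmeas (Filter.Eventually.of_forall fun ω => ?_)
    simp only [Real.norm_eq_abs]
    split
    · rw [abs_abs]
    · simp [abs_nonneg]
  rw [← integral_sub I1 I2]
  calc |∫ ω, (((Y ω - g (X ω)) ^ 2 - (Y ω - gstar (X ω)) ^ 2) -
        ((min (Y ω) βt - g (X ω)) ^ 2 - (min (Y ω) βt - gstar (X ω)) ^ 2)) ∂μ|
      ≤ ∫ ω, |((Y ω - g (X ω)) ^ 2 - (Y ω - gstar (X ω)) ^ 2) -
        ((min (Y ω) βt - g (X ω)) ^ 2 - (min (Y ω) βt - gstar (X ω)) ^ 2)| ∂μ :=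
        by simpa [Real.norm_eq_abs] using
          norm_integral_le_integral_norm (μ := μ)
            (fun ω => ((Y ω - g (X ω)) ^ 2 - (Y ω - gstar (X ω)) ^ 2) -
              ((min (Y ω) βt - g (X ω)) ^ 2 - (min (Y ω) βt - gstar (X ω)) ^ 2))
    _ ≤ ∫ ω, 4 * B * (if βt < Y ω then |Y ω| else 0) ∂μ := by
        refine integral_mono (I1.sub I2).abs (hφ.const_mul (4 * B)) fun ω => ?_
        by_cases h : βt < Y ω
        · have hmin : min (Y ω) βt = βt := min_eq_right h.le
          rw [hmin, if_pos h]
          have key : ((Y ω - g (X ω)) ^ 2 - (Y ω - gstar (X ω)) ^ 2) -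
              ((βt - g (X ω)) ^ 2 - (βt - gstar (X ω)) ^ 2)
              = 2 * (Y ω - βt) * (gstar (X ω) - g (X ω)) := by ring
          rw [key, abs_mul, abs_mul]
          have h1 : |Y ω - βt| ≤ |Y ω| := by
            rw [abs_of_nonneg (by linarith : (0:ℝ) ≤ Y ω - βt),
              abs_of_nonneg (by linarith : (0:ℝ) ≤ Y ω)]
            linarith
          have h2 := hbdd (X ω)
          have h2' : (0:ℝ) ≤ 2 * B := le_trans (abs_nonneg _) h2
          have := abs_nonneg (Y ω - βt)
          calc |2| * |Y ω - βt| * |gstar (X ω) - g (X ω)|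
              ≤ |2| * |Y ω| * (2 * B) := by
                rw [abs_two]
                apply mul_le_mul _ h2 (abs_nonneg _) (by positivity)
                exact mul_le_mul_of_nonneg_left h1 (by norm_num)
            _ = 4 * B * |Y ω| := by rw [abs_two]; ring
        · have hmin : min (Y ω) βt = Y ω := min_eq_left (not_lt.mp h)
          rw [hmin, if_neg h]
          simp
    _ = 4 * B * ∫ ω, (if βt < Y ω then |Y ω| else 0) ∂μ := integral_const_mul _ _
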